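/- Let k be an algebraically closed field with char k ≠ 2, and let a ∈ k with a ≠ 1. In the algebra P(a), the elements r², s², and t² (squares of the images of the generators) are central, and the family of monomials { rⁱ sʲ tᵏ : i, j, k ∈ ℕ } is a basis of P(a) as a k-vector space (so the multiplication map from k₋₁[r,s] ⊗ k[t] to P(a) is a linear isomorphism, i.e., P(a) is a graded twisted tensor product of k₋₁[r,s] and k[t]). -/

import Mathlib

noncomputable section

/-- The free algebra on three generators `x, y, z` (indexed by `Fin 3`). -/
abbrev F3 (k : Type) [Field k] : Type := FreeAlgebra k (Fin 3)

noncomputable def X (k : Type) [Field k] : F3 k := FreeAlgebra.ι k 0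
noncomputable def Y (k : Type) [Field k] : F3 k := FreeAlgebra.ι k 1
noncomputable def Z (k : Type) [Field k] : F3 k := FreeAlgebra.ι k 2

/-- The quotient of the free algebra on `x, y, z` by the two-sided ideal
generated by the set `rels`. -/
abbrev quotAlg (k : Type) [Field k] (rels : Set (F3 k)) : Type :=
  RingQuot (fun a b : F3 k => a ∈ rels ∧ b = 0)

/-- The image of the `i`-th generator in the quotient algebra. -/
noncomputable def gen (k : Type) [Field k] (rels : Set (F3 k)) (i : Fin 3) :
    quotAlg k rels :=
  RingQuot.mkAlgHom k (fun a b : F3 k => a ∈ rels ∧ b = 0) (FreeAlgebra.ι k i)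

/-- The `k`-linear span of the images of the generators in the quotient. -/
noncomputable def genSpan (k : Type) [Field k] (rels : Set (F3 k)) :
    Submodule k (quotAlg k rels) :=
  Submodule.span k (Set.range (gen k rels))

/-- There is a graded isomorphism between the two quotient algebras:
a `k`-algebra isomorphism carrying the span of the generators onto the
span of the generators. -/
def GradedIso (k : Type) [Field k] (r1 r2 : Set (F3 k)) : Prop :=
  ∃ φ : quotAlg k r1 ≃ₐ[k] quotAlg k r2,
    Submodule.map φ.toLinearMap (genSpan k r1) = genSpan k r2

/-- Relations of `P(a) = k⟨r,s,t⟩/⟨rs + sr, tr + rt − t² − a·r², t(r−s) + (r−s)t + 2s²⟩`,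
with the generators `r, s, t` realized as the generators `X, Y, Z` of the free algebra. -/
noncomputable def Prel (k : Type) [Field k] (a : k) : Set (F3 k) :=
  {X k * Y k + Y k * X k,
   Z k * X k + X k * Z k - Z k ^ 2 - a • X k ^ 2,
   Z k * (X k - Y k) + (X k - Y k) * Z k + 2 * Y k ^ 2}

/-! ### Operator side: a representation on `(ℕ × ℕ × ℕ) →₀ k` -/

section OperatorSide

variable {k : Type} [Field k]

abbrev V (k : Type) [Field k] : Type := (ℕ × ℕ × ℕ) →₀ k

noncomputable def bas (k : Type) [Field k] (p : ℕ × ℕ × ℕ) : V k := Finsupp.single p 1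

lemma lift_bas (f : (ℕ × ℕ × ℕ) → V k) (p : ℕ × ℕ × ℕ) :
    Finsupp.lift (V k) k _ f (bas k p) = f p := by
  simp [bas, Finsupp.lift_apply, Finsupp.sum_single_index]

noncomputable def opR (k : Type) [Field k] : V k →ₗ[k] V k :=
  Finsupp.lift (V k) k _ fun p => bas k (p.1 + 1, p.2.1, p.2.2)

noncomputable def opS (k : Type) [Field k] : V k →ₗ[k] V k :=
  Finsupp.lift (V k) k _ fun p => (-1 : k) ^ p.1 • bas k (p.1, p.2.1 + 1, p.2.2)

noncomputable def Tfun (a : k) (p : ℕ × ℕ × ℕ) : V k :=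
  if p.1 % 2 = 0 then
    if p.2.1 % 2 = 0 then bas k (p.1, p.2.1, p.2.2 + 1)
    else -bas k (p.1, p.2.1, p.2.2 + 1) + bas k (p.1, p.2.1 - 1, p.2.2 + 2)
      + a • bas k (p.1 + 2, p.2.1 - 1, p.2.2) + (2 : k) • bas k (p.1, p.2.1 + 1, p.2.2)
  else
    if p.2.1 % 2 = 0 then
      -bas k (p.1, p.2.1, p.2.2 + 1) + bas k (p.1 - 1, p.2.1, p.2.2 + 2)
        + a • bas k (p.1 + 1, p.2.1, p.2.2)
    else bas k (p.1, p.2.1, p.2.2 + 1) - bas k (p.1, p.2.1 - 1, p.2.2 + 2)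
      - a • bas k (p.1 + 2, p.2.1 - 1, p.2.2) - (2 : k) • bas k (p.1, p.2.1 + 1, p.2.2)
      + bas k (p.1 - 1, p.2.1, p.2.2 + 2) + a • bas k (p.1 + 1, p.2.1, p.2.2)

noncomputable def opT (a : k) : V k →ₗ[k] V k := Finsupp.lift (V k) k _ (Tfun a)

@[simp] lemma opR_bas (i j K : ℕ) : opR k (bas k (i, j, K)) = bas k (i + 1, j, K) :=
  lift_bas _ _

@[simp] lemma opS_bas (i j K : ℕ) :
    opS k (bas k (i, j, K)) = (-1 : k) ^ i • bas k (i, j + 1, K) :=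
  lift_bas _ _

@[simp] lemma opT_bas (a : k) (i j K : ℕ) : opT a (bas k (i, j, K)) = Tfun a (i, j, K) :=
  lift_bas _ _

lemma Tee (a : k) (i j K : ℕ) (hi : i % 2 = 0) (hj : j % 2 = 0) :
    Tfun a (i, j, K) = bas k (i, j, K + 1) := by
  simp [Tfun, hi, hj]

lemma Teo (a : k) (i j K : ℕ) (hi : i % 2 = 0) (hj : j % 2 = 1) :
    Tfun a (i, j, K) = -bas k (i, j, K + 1) + bas k (i, j - 1, K + 2)
      + a • bas k (i + 2, j - 1, K) + (2 : k) • bas k (i, j + 1, K) := by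
  simp [Tfun, hi, hj]

lemma Toe (a : k) (i j K : ℕ) (hi : i % 2 = 1) (hj : j % 2 = 0) :
    Tfun a (i, j, K) = -bas k (i, j, K + 1) + bas k (i - 1, j, K + 2)
      + a • bas k (i + 1, j, K) := by
  simp [Tfun, hi, hj]

lemma Too (a : k) (i j K : ℕ) (hi : i % 2 = 1) (hj : j % 2 = 1) :
    Tfun a (i, j, K) = bas k (i, j, K + 1) - bas k (i, j - 1, K + 2)
      - a • bas k (i + 2, j - 1, K) - (2 : k) • bas k (i, j + 1, K)
      + bas k (i - 1, j, K + 2) + a • bas k (i + 1, j, K) := by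
  simp [Tfun, hi, hj]

lemma negpow_even (i : ℕ) (h : i % 2 = 0) : (-1 : k) ^ i = 1 :=
  Even.neg_one_pow (Nat.even_iff.mpr h)

lemma negpow_odd (i : ℕ) (h : i % 2 = 1) : (-1 : k) ^ i = -1 :=
  Odd.neg_one_pow (Nat.odd_iff.mpr h)


lemma nfx1 (n : ℕ) : n + 1 + 1 = n + 2 := by omega
lemma nfx2 (n : ℕ) : n + 1 + 2 = n + 3 := by omega
lemma nfx3 (n : ℕ) : n + 2 + 1 = n + 3 := by omega
lemma nfx4 (n : ℕ) : n + 2 + 2 = n + 4 := by omega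
lemma nfx5 (n : ℕ) : n + 2 - 1 = n + 1 := by omega

lemma opRel1 (p : ℕ × ℕ × ℕ) :
    opR k (opS k (bas k p)) + opS k (opR k (bas k p)) = 0 := by
  obtain ⟨i, j, K⟩ := p
  rcases Nat.even_or_odd i with hi | hi
  · have h1 : i % 2 = 0 := Nat.even_iff.mp hi
    simp (disch := omega) only [opR_bas, opS_bas, map_add, map_sub, map_neg, map_smul,
      negpow_even, negpow_odd, one_smul, neg_smul]
    module
  · have h1 : i % 2 = 1 := Nat.odd_iff.mp hi
    simp (disch := omega) only [opR_bas, opS_bas, map_add, map_sub, map_neg, map_smul,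
      negpow_even, negpow_odd, one_smul, neg_smul]
    module

lemma opRel2 (a : k) (p : ℕ × ℕ × ℕ) :
    opT a (opR k (bas k p)) + opR k (opT a (bas k p))
      - opT a (opT a (bas k p)) - a • opR k (opR k (bas k p)) = 0 := by
  obtain ⟨i, j, K⟩ := p
  rcases Nat.even_or_odd i with hi | hi <;> rcases Nat.even_or_odd j with hj | hj
  · have h1 : i % 2 = 0 := Nat.even_iff.mp hi
    have h2 : j % 2 = 0 := Nat.even_iff.mp hj
    simp (disch := omega) only [opR_bas, opS_bas, opT_bas, Tee, Teo, Toe, Too,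
      map_add, map_sub, map_neg, map_smul, Nat.add_sub_cancel, nfx1, nfx2, nfx3, nfx4, nfx5]
    module
  · have h1 : i % 2 = 0 := Nat.even_iff.mp hi
    have h2 : j % 2 = 1 := Nat.odd_iff.mp hj
    simp (disch := omega) only [opR_bas, opS_bas, opT_bas, Tee, Teo, Toe, Too,
      map_add, map_sub, map_neg, map_smul, Nat.add_sub_cancel, nfx1, nfx2, nfx3, nfx4, nfx5]
    try simp only [show j - 1 + 2 = j + 1 by omega, show j - 1 + 1 = j by omega]
    match_scalars <;> ring1
  · have h1 : i % 2 = 1 := Nat.odd_iff.mp hi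
    have h2 : j % 2 = 0 := Nat.even_iff.mp hj
    simp (disch := omega) only [opR_bas, opS_bas, opT_bas, Tee, Teo, Toe, Too,
      map_add, map_sub, map_neg, map_smul, Nat.add_sub_cancel, nfx1, nfx2, nfx3, nfx4, nfx5]
    try simp only [show i - 1 + 2 = i + 1 by omega, show i - 1 + 1 = i by omega]
    match_scalars <;> ring1
  · have h1 : i % 2 = 1 := Nat.odd_iff.mp hi
    have h2 : j % 2 = 1 := Nat.odd_iff.mp hj
    simp (disch := omega) only [opR_bas, opS_bas, opT_bas, Tee, Teo, Toe, Too,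
      map_add, map_sub, map_neg, map_smul, Nat.add_sub_cancel, nfx1, nfx2, nfx3, nfx4, nfx5]
    try simp only [show i - 1 + 2 = i + 1 by omega, show i - 1 + 1 = i by omega,
      show j - 1 + 2 = j + 1 by omega, show j - 1 + 1 = j by omega]
    match_scalars <;> ring1

lemma opRel3 (a : k) (p : ℕ × ℕ × ℕ) :
    opT a ((opR k - opS k) (bas k p)) + (opR k - opS k) (opT a (bas k p))
      + (opS k (opS k (bas k p)) + opS k (opS k (bas k p))) = 0 := by
  obtain ⟨i, j, K⟩ := p
  simp only [LinearMap.sub_apply, map_sub]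
  rcases Nat.even_or_odd i with hi | hi <;> rcases Nat.even_or_odd j with hj | hj
  · have h1 : i % 2 = 0 := Nat.even_iff.mp hi
    have h2 : j % 2 = 0 := Nat.even_iff.mp hj
    simp (disch := omega) only [opR_bas, opS_bas, opT_bas, Tee, Teo, Toe, Too,
      map_add, map_sub, map_neg, map_smul, Nat.add_sub_cancel,
      negpow_even, negpow_odd, one_smul, neg_smul, smul_neg, neg_neg,
      nfx1, nfx2, nfx3, nfx4, nfx5]
    match_scalars <;> ring1
  · have h1 : i % 2 = 0 := Nat.even_iff.mp hi
    have h2 : j % 2 = 1 := Nat.odd_iff.mp hj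
    simp (disch := omega) only [opR_bas, opS_bas, opT_bas, Tee, Teo, Toe, Too,
      map_add, map_sub, map_neg, map_smul, Nat.add_sub_cancel,
      negpow_even, negpow_odd, one_smul, neg_smul, smul_neg, neg_neg,
      nfx1, nfx2, nfx3, nfx4, nfx5]
    try simp only [show j - 1 + 2 = j + 1 by omega, show j - 1 + 1 = j by omega]
    match_scalars <;> ring1
  · have h1 : i % 2 = 1 := Nat.odd_iff.mp hi
    have h2 : j % 2 = 0 := Nat.even_iff.mp hj
    simp (disch := omega) only [opR_bas, opS_bas, opT_bas, Tee, Teo, Toe, Too,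
      map_add, map_sub, map_neg, map_smul, Nat.add_sub_cancel,
      negpow_even, negpow_odd, one_smul, neg_smul, smul_neg, neg_neg,
      nfx1, nfx2, nfx3, nfx4, nfx5]
    try simp only [show i - 1 + 2 = i + 1 by omega, show i - 1 + 1 = i by omega]
    match_scalars <;> ring1
  · have h1 : i % 2 = 1 := Nat.odd_iff.mp hi
    have h2 : j % 2 = 1 := Nat.odd_iff.mp hj
    simp (disch := omega) only [opR_bas, opS_bas, opT_bas, Tee, Teo, Toe, Too,
      map_add, map_sub, map_neg, map_smul, Nat.add_sub_cancel,
      negpow_even, negpow_odd, one_smul, neg_smul, smul_neg, neg_neg,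
      nfx1, nfx2, nfx3, nfx4, nfx5]
    try simp only [show i - 1 + 2 = i + 1 by omega, show i - 1 + 1 = i by omega,
      show j - 1 + 2 = j + 1 by omega, show j - 1 + 1 = j by omega]
    match_scalars <;> ring1

noncomputable def gvec (a : k) : Fin 3 → Module.End k (V k) := ![opR k, opS k, opT a]

noncomputable def rho (a : k) : F3 k →ₐ[k] Module.End k (V k) :=
  FreeAlgebra.lift k (gvec a)

lemma single_eq_bas (p : ℕ × ℕ × ℕ) : (Finsupp.single p 1 : V k) = bas k p := rfl

lemma rho_rel (a : k) : ∀ x ∈ Prel k a, rho a x = 0 := by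
  intro x hx
  simp only [Prel, Set.mem_insert_iff, Set.mem_singleton_iff] at hx
  rcases hx with rfl | rfl | rfl
  · have : rho a (X k * Y k + Y k * X k) = opR k * opS k + opS k * opR k := by
      simp [rho, X, Y, gvec, FreeAlgebra.lift_ι_apply]
    rw [this]
    ext p : 2
    simp only [LinearMap.comp_apply, Finsupp.lsingle_apply, LinearMap.add_apply,
      Module.End.mul_apply, LinearMap.zero_apply, single_eq_bas]
    exact opRel1 p
  · have : rho a (Z k * X k + X k * Z k - Z k ^ 2 - a • X k ^ 2)
        = opT a * opR k + opR k * opT a - opT a * opT a - a • (opR k * opR k) := by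
      simp [rho, X, Z, gvec, FreeAlgebra.lift_ι_apply, pow_two, smul_mul_assoc]
    rw [this]
    ext p : 2
    simp only [LinearMap.comp_apply, Finsupp.lsingle_apply, LinearMap.add_apply,
      LinearMap.sub_apply, Module.End.mul_apply, LinearMap.smul_apply,
      LinearMap.zero_apply, single_eq_bas]
    exact opRel2 a p
  · have : rho a (Z k * (X k - Y k) + (X k - Y k) * Z k + 2 * Y k ^ 2)
        = opT a * (opR k - opS k) + (opR k - opS k) * opT a
          + (opS k * opS k + opS k * opS k) := by
      simp only [map_add, map_mul, map_sub, map_pow, map_ofNat]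
      simp [rho, X, Y, Z, gvec, FreeAlgebra.lift_ι_apply, pow_two, two_mul]
    rw [this]
    ext p : 2
    simp only [LinearMap.comp_apply, Finsupp.lsingle_apply, LinearMap.add_apply,
      LinearMap.sub_apply, Module.End.mul_apply, LinearMap.zero_apply, single_eq_bas]
    exact opRel3 a p

end OperatorSide

/-! ### Quotient side -/

section QuotientSide

variable {k : Type} [Field k] (a : k)

lemma relq (x : F3 k) (hx : x ∈ Prel k a) :
    RingQuot.mkAlgHom k (fun u v : F3 k => u ∈ Prel k a ∧ v = 0) x = 0 := by
  have h := RingQuot.mkAlgHom_rel k (s := fun u v : F3 k => u ∈ Prel k a ∧ v = 0) ⟨hx, rfl⟩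
  simpa using h

noncomputable def rg : quotAlg k (Prel k a) := gen k (Prel k a) 0
noncomputable def sg : quotAlg k (Prel k a) := gen k (Prel k a) 1
noncomputable def tg : quotAlg k (Prel k a) := gen k (Prel k a) 2

lemma relq1 : rg a * sg a + sg a * rg a = 0 := by
  have h := relq a _ (show X k * Y k + Y k * X k ∈ Prel k a by left; rfl)
  simpa [rg, sg, gen, X, Y, map_add, map_mul] using h

lemma relq2 : tg a * rg a + rg a * tg a - tg a * tg a - a • (rg a * rg a) = 0 := by
  have h := relq a _ (show Z k * X k + X k * Z k - Z k ^ 2 - a • X k ^ 2 ∈ Prel k a by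
    right; left; rfl)
  simpa [rg, tg, gen, X, Z, map_add, map_mul, map_sub, map_smul, pow_two] using h

lemma relq3 : tg a * (rg a - sg a) + (rg a - sg a) * tg a + 2 * (sg a * sg a) = 0 := by
  have h := relq a _ (show Z k * (X k - Y k) + (X k - Y k) * Z k + 2 * Y k ^ 2 ∈ Prel k a by
    right; right; rfl)
  simpa [rg, sg, tg, gen, X, Y, Z, map_add, map_mul, map_sub, pow_two, map_ofNat] using h

lemma hrw2 : tg a * rg a = tg a * tg a + a • (rg a * rg a) - rg a * tg a := by
  have h := relq2 a
  rw [← sub_eq_zero]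
  rw [← h]
  module

lemma hrw1 : sg a * rg a = -(rg a * sg a) := by
  have h := relq1 a
  rw [← sub_eq_zero, ← h]; module

lemma hrw1' : rg a * sg a = -(sg a * rg a) := by
  rw [hrw1, neg_neg]

lemma hrw3 : tg a * sg a
    = tg a * tg a + a • (rg a * rg a) + (2 : k) • (sg a * sg a) - sg a * tg a := by
  have h3 := relq3 a
  have h2 := relq2 a
  rw [← sub_eq_zero]
  have expand : tg a * (rg a - sg a) + (rg a - sg a) * tg a + 2 * (sg a * sg a)
      = (tg a * rg a + rg a * tg a - tg a * tg a - a • (rg a * rg a))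
        + (tg a * tg a + a • (rg a * rg a) + (2 : k) • (sg a * sg a) - tg a * sg a
          - sg a * tg a) := by
    simp only [mul_sub, sub_mul, two_mul, two_smul]
    module
  rw [expand, h2, zero_add] at h3
  rw [← neg_eq_zero.mpr h3]; module

lemma q_trr : tg a * (rg a * rg a)
    = (tg a * tg a) * rg a - rg a * (tg a * tg a) + rg a * (rg a * tg a) := by
  calc tg a * (rg a * rg a) = (tg a * rg a) * rg a := by rw [mul_assoc]
    _ = (tg a * tg a + a • (rg a * rg a) - rg a * tg a) * rg a := by rw [hrw2]
    _ = (tg a * tg a) * rg a + a • (rg a * (rg a * rg a)) - rg a * (tg a * rg a) := by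
        simp only [add_mul, sub_mul, smul_mul_assoc, mul_assoc]
    _ = (tg a * tg a) * rg a + a • (rg a * (rg a * rg a))
        - rg a * (tg a * tg a + a • (rg a * rg a) - rg a * tg a) := by rw [hrw2]
    _ = _ := by
        simp only [mul_add, mul_sub, mul_smul_comm]
        module

variable {a}

lemma q_ttr (ha : a ≠ 1) : (tg a * tg a) * rg a = rg a * (tg a * tg a) := by
  have key : tg a * (tg a * rg a)
      = a • (tg a * (tg a * rg a)) - a • (rg a * (tg a * tg a)) + rg a * (tg a * tg a) := by
    conv_lhs => rw [hrw2]
    conv_lhs => simp only [mul_sub, mul_add, mul_smul_comm]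
    conv_lhs => rw [q_trr,
      show tg a * (rg a * tg a) = (tg a * rg a) * tg a from (mul_assoc _ _ _).symm, hrw2]
    conv_lhs => simp only [add_mul, sub_mul, smul_mul_assoc, smul_add, smul_sub, mul_assoc]
    module
  have k2 : tg a * (tg a * rg a) - a • (tg a * (tg a * rg a))
      = rg a * (tg a * tg a) - a • (rg a * (tg a * tg a)) := by
    nth_rewrite 1 [key]; module
  have h6 : (1 - a) • (tg a * (tg a * rg a) - rg a * (tg a * tg a)) = 0 := by
    have h0 := sub_eq_zero.mpr k2
    calc (1 - a) • (tg a * (tg a * rg a) - rg a * (tg a * tg a))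
        = (tg a * (tg a * rg a) - a • (tg a * (tg a * rg a)))
          - (rg a * (tg a * tg a) - a • (rg a * (tg a * tg a))) := by module
      _ = 0 := h0
  have h7 : (1 : k) - a ≠ 0 := sub_ne_zero.mpr fun h => ha h.symm
  have h8 : tg a * (tg a * rg a) - rg a * (tg a * tg a) = 0 := by
    have h9 := congrArg (fun x => (1 - a)⁻¹ • x) h6
    simpa [smul_smul, inv_mul_cancel₀ h7] using h9
  rw [mul_assoc]
  exact sub_eq_zero.mp h8

lemma q_tr2 (ha : a ≠ 1) : tg a * (rg a * rg a) = (rg a * rg a) * tg a := by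
  rw [q_trr, q_ttr ha, mul_assoc]
  module

variable (a)

lemma q_rrs : (rg a * rg a) * sg a = sg a * (rg a * rg a) := by
  have A : rg a * (rg a * sg a) + rg a * (sg a * rg a) = 0 := by
    have h := congrArg (fun x => rg a * x) (relq1 a)
    simpa [mul_add] using h
  have B : rg a * (sg a * rg a) + sg a * (rg a * rg a) = 0 := by
    have h := congrArg (fun x => x * rg a) (relq1 a)
    simpa [add_mul, mul_assoc] using h
  have C : rg a * (rg a * sg a) - sg a * (rg a * rg a) = 0 := by
    calc rg a * (rg a * sg a) - sg a * (rg a * rg a)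
        = (rg a * (rg a * sg a) + rg a * (sg a * rg a))
          - (rg a * (sg a * rg a) + sg a * (rg a * rg a)) := by module
      _ = 0 - 0 := by rw [A, B]
      _ = 0 := by rw [sub_zero]
  rw [mul_assoc]
  exact sub_eq_zero.mp C

lemma q_ssr : (sg a * sg a) * rg a = rg a * (sg a * sg a) := by
  have A : sg a * (rg a * sg a) + sg a * (sg a * rg a) = 0 := by
    have h := congrArg (fun x => sg a * x) (relq1 a)
    simpa [mul_add] using h
  have B : rg a * (sg a * sg a) + sg a * (rg a * sg a) = 0 := by
    have h := congrArg (fun x => x * sg a) (relq1 a)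
    simpa [add_mul, mul_assoc] using h
  have C : sg a * (sg a * rg a) - rg a * (sg a * sg a) = 0 := by
    calc sg a * (sg a * rg a) - rg a * (sg a * sg a)
        = (sg a * (rg a * sg a) + sg a * (sg a * rg a))
          - (rg a * (sg a * sg a) + sg a * (rg a * sg a)) := by module
      _ = 0 - 0 := by rw [A, B]
      _ = 0 := by rw [sub_zero]
  rw [mul_assoc]
  exact sub_eq_zero.mp C

lemma q_tss : tg a * (sg a * sg a)
    = (tg a * tg a) * sg a - sg a * (tg a * tg a) + sg a * (sg a * tg a) := by
  calc tg a * (sg a * sg a) = (tg a * sg a) * sg a := by rw [mul_assoc]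
    _ = (tg a * tg a + a • (rg a * rg a) + (2 : k) • (sg a * sg a) - sg a * tg a) * sg a := by
        rw [hrw3]
    _ = (tg a * tg a) * sg a + a • (rg a * (rg a * sg a))
        + (2 : k) • (sg a * (sg a * sg a)) - sg a * (tg a * sg a) := by
        simp only [add_mul, sub_mul, smul_mul_assoc, mul_assoc]
    _ = (tg a * tg a) * sg a + a • (sg a * (rg a * rg a))
        + (2 : k) • (sg a * (sg a * sg a))
        - sg a * (tg a * tg a + a • (rg a * rg a) + (2 : k) • (sg a * sg a) - sg a * tg a) := by
        rw [hrw3, show rg a * (rg a * sg a) = sg a * (rg a * rg a) from by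
          rw [← mul_assoc, q_rrs]]
    _ = _ := by
        simp only [mul_add, mul_sub, mul_smul_comm]
        module

variable {a}

lemma q_tts (ha : a ≠ 1) : (tg a * tg a) * sg a = sg a * (tg a * tg a) := by
  have key2 : tg a * (tg a * sg a)
      = tg a * (tg a * sg a) + tg a * (tg a * sg a) - sg a * (tg a * tg a) := by
    conv_lhs => rw [hrw3]
    conv_lhs => simp only [mul_sub, mul_add, mul_smul_comm]
    conv_lhs => rw [q_tr2 ha, q_tss,
      show tg a * (sg a * tg a) = (tg a * sg a) * tg a from (mul_assoc _ _ _).symm, hrw3]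
    conv_lhs => simp only [add_mul, sub_mul, smul_mul_assoc, smul_add, smul_sub, mul_assoc]
    module
  have h := key2
  rw [eq_sub_iff_add_eq] at h
  have h2 := add_left_cancel h
  rw [mul_assoc]
  exact h2.symm

lemma q_ts2 (ha : a ≠ 1) : tg a * (sg a * sg a) = (sg a * sg a) * tg a := by
  rw [q_tss, q_tts ha, mul_assoc]
  module

end QuotientSide


/-! ### Straightening and span -/

section Straighten

variable {k : Type} [Field k] {a : k}

lemma sq_pow {M : Type*} [Monoid M] (x : M) (m : ℕ) : (x * x) ^ m = x ^ (2 * m) := by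
  rw [← pow_two, ← pow_mul]

lemma hrw1s : sg a * rg a = (-1 : k) • (rg a * sg a) := by
  have h := relq1 a
  rw [← sub_eq_zero, ← h]; module

lemma t_rpow_even (ha : a ≠ 1) (m : ℕ) :
    tg a * rg a ^ (2 * m) = rg a ^ (2 * m) * tg a := by
  have h := ((show Commute (tg a) (rg a * rg a) from q_tr2 ha).pow_right m).eq
  rwa [sq_pow] at h

lemma t_spow_even (ha : a ≠ 1) (n : ℕ) :
    tg a * sg a ^ (2 * n) = sg a ^ (2 * n) * tg a := by
  have h := ((show Commute (tg a) (sg a * sg a) from q_ts2 ha).pow_right n).eq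
  rwa [sq_pow] at h

lemma tt_spow (ha : a ≠ 1) (j : ℕ) :
    (tg a * tg a) * sg a ^ j = sg a ^ j * (tg a * tg a) :=
  ((show Commute (tg a * tg a) (sg a) from q_tts ha).pow_right j).eq

lemma tt_rpow (ha : a ≠ 1) (i : ℕ) :
    (tg a * tg a) * rg a ^ i = rg a ^ i * (tg a * tg a) :=
  ((show Commute (tg a * tg a) (rg a) from q_ttr ha).pow_right i).eq

lemma rr_spow (j : ℕ) :
    (rg a * rg a) * sg a ^ j = sg a ^ j * (rg a * rg a) :=
  ((show Commute (rg a * rg a) (sg a) from q_rrs a).pow_right j).eq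

lemma ss_rpow (i : ℕ) :
    (sg a * sg a) * rg a ^ i = rg a ^ i * (sg a * sg a) :=
  ((show Commute (sg a * sg a) (rg a) from q_ssr a).pow_right i).eq

lemma E1' (ha : a ≠ 1) (m : ℕ) (x : quotAlg k (Prel k a)) :
    tg a * (rg a ^ (2 * m) * x) = rg a ^ (2 * m) * (tg a * x) := by
  rw [← mul_assoc, t_rpow_even ha, mul_assoc]

lemma E2' (ha : a ≠ 1) (n : ℕ) (x : quotAlg k (Prel k a)) :
    tg a * (sg a ^ (2 * n) * x) = sg a ^ (2 * n) * (tg a * x) := by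
  rw [← mul_assoc, t_spow_even ha, mul_assoc]

lemma Ht2s (ha : a ≠ 1) (j : ℕ) (x : quotAlg k (Prel k a)) :
    tg a * (tg a * (sg a ^ j * x)) = sg a ^ j * (tg a * (tg a * x)) := by
  calc tg a * (tg a * (sg a ^ j * x)) = ((tg a * tg a) * sg a ^ j) * x := by
        rw [← mul_assoc, ← mul_assoc]
    _ = (sg a ^ j * (tg a * tg a)) * x := by rw [tt_spow ha]
    _ = sg a ^ j * (tg a * (tg a * x)) := by rw [mul_assoc, mul_assoc]

lemma sE4' (j : ℕ) (y : quotAlg k (Prel k a)) :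
    sg a ^ j * (rg a * (rg a * y)) = rg a * (rg a * (sg a ^ j * y)) := by
  calc sg a ^ j * (rg a * (rg a * y)) = (sg a ^ j * (rg a * rg a)) * y := by
        rw [show rg a * (rg a * y) = (rg a * rg a) * y from (mul_assoc _ _ _).symm,
          ← mul_assoc]
    _ = ((rg a * rg a) * sg a ^ j) * y := by rw [rr_spow]
    _ = rg a * (rg a * (sg a ^ j * y)) := by rw [mul_assoc, mul_assoc]

lemma clT (K : ℕ) : tg a * tg a ^ K = tg a ^ (K + 1) := (pow_succ' _ _).symm

lemma clR (n : ℕ) (y : quotAlg k (Prel k a)) :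
    rg a ^ n * (rg a * y) = rg a ^ (n + 1) * y := by
  rw [← mul_assoc, ← pow_succ]

lemma clS (n : ℕ) (y : quotAlg k (Prel k a)) :
    sg a ^ n * (sg a * y) = sg a ^ (n + 1) * y := by
  rw [← mul_assoc, ← pow_succ]

lemma H4 (ha : a ≠ 1) (m : ℕ) (x : quotAlg k (Prel k a)) :
    tg a * (rg a ^ (2 * m + 1) * x)
      = rg a ^ (2 * m) * (tg a * (tg a * x) + a • (rg a * (rg a * x))
          - rg a * (tg a * x)) := by
  have o1 : tg a * rg a ^ (2 * m + 1)
      = rg a ^ (2 * m) * (tg a * tg a + a • (rg a * rg a) - rg a * tg a) := by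
    rw [pow_succ, ← mul_assoc, t_rpow_even ha, mul_assoc, hrw2]
  rw [← mul_assoc, o1, mul_assoc]
  congr 1
  simp only [sub_mul, add_mul, smul_mul_assoc, mul_assoc]

lemma H5 (ha : a ≠ 1) (n : ℕ) (x : quotAlg k (Prel k a)) :
    tg a * (sg a ^ (2 * n + 1) * x)
      = sg a ^ (2 * n) * (tg a * (tg a * x) + a • (rg a * (rg a * x))
          + (2 : k) • (sg a * (sg a * x)) - sg a * (tg a * x)) := by
  have o1 : tg a * sg a ^ (2 * n + 1)
      = sg a ^ (2 * n) * (tg a * tg a + a • (rg a * rg a)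
          + (2 : k) • (sg a * sg a) - sg a * tg a) := by
    rw [pow_succ, ← mul_assoc, t_spow_even ha, mul_assoc, hrw3]
  rw [← mul_assoc, o1, mul_assoc]
  congr 1
  simp only [sub_mul, add_mul, smul_mul_assoc, mul_assoc]

noncomputable def mono (a : k) (p : ℕ × ℕ × ℕ) : quotAlg k (Prel k a) :=
  rg a ^ p.1 * sg a ^ p.2.1 * tg a ^ p.2.2

noncomputable def Msub (a : k) : Submodule k (quotAlg k (Prel k a)) :=
  Submodule.span k (Set.range (mono a))

lemma mem_shape (A B C : ℕ) : rg a ^ A * (sg a ^ B * tg a ^ C) ∈ Msub a :=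
  Submodule.subset_span ⟨(A, B, C), by simp [mono, mul_assoc]⟩

lemma r_mem (p : ℕ × ℕ × ℕ) :
    rg a * (rg a ^ p.1 * (sg a ^ p.2.1 * tg a ^ p.2.2)) ∈ Msub a := by
  rw [← mul_assoc, ← pow_succ']
  exact mem_shape _ _ _

lemma s_mul_rpow (i : ℕ) :
    sg a * rg a ^ i = (-1 : k) ^ i • (rg a ^ i * sg a) := by
  induction i with
  | zero => simp
  | succ i ih =>
    calc sg a * rg a ^ (i + 1) = (sg a * rg a ^ i) * rg a := by rw [pow_succ, mul_assoc]
      _ = ((-1 : k) ^ i • (rg a ^ i * sg a)) * rg a := by rw [ih]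
      _ = (-1 : k) ^ i • (rg a ^ i * (sg a * rg a)) := by rw [smul_mul_assoc, mul_assoc]
      _ = (-1 : k) ^ i • (rg a ^ i * ((-1 : k) • (rg a * sg a))) := by rw [hrw1s]
      _ = (-1 : k) ^ (i + 1) • (rg a ^ (i + 1) * sg a) := by
          rw [mul_smul_comm, smul_smul,
            show rg a ^ i * (rg a * sg a) = rg a ^ (i + 1) * sg a from by
              rw [← mul_assoc, ← pow_succ]]
          match_scalars <;> ring1

lemma s_mem (p : ℕ × ℕ × ℕ) :
    sg a * (rg a ^ p.1 * (sg a ^ p.2.1 * tg a ^ p.2.2)) ∈ Msub a := by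
  obtain ⟨i, j, K⟩ := p
  have h : sg a * (rg a ^ i * (sg a ^ j * tg a ^ K))
      = (-1 : k) ^ i • (rg a ^ i * (sg a ^ (j + 1) * tg a ^ K)) := by
    rw [← mul_assoc, s_mul_rpow, smul_mul_assoc, mul_assoc,
      show sg a * (sg a ^ j * tg a ^ K) = sg a ^ (j + 1) * tg a ^ K from by
        rw [← mul_assoc, ← pow_succ']]
  rw [h]
  exact Submodule.smul_mem _ _ (mem_shape _ _ _)

lemma t_mem (ha : a ≠ 1) (p : ℕ × ℕ × ℕ) :
    tg a * (rg a ^ p.1 * (sg a ^ p.2.1 * tg a ^ p.2.2)) ∈ Msub a := by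
  obtain ⟨i, j, K⟩ := p
  rcases Nat.even_or_odd' i with ⟨m, hm | hm⟩ <;>
    rcases Nat.even_or_odd' j with ⟨n, hn | hn⟩ <;> subst hm <;> subst hn
  · rw [E1' ha, E2' ha]
    simp only [clT]
    exact mem_shape _ _ _
  · rw [E1' ha, H5 ha]
    simp only [clT, sE4', mul_add, mul_sub, mul_smul_comm, clR, clS]
    repeat
      first
      | apply Submodule.add_mem
      | apply Submodule.sub_mem
      | apply Submodule.smul_mem
      | exact mem_shape _ _ _
  · rw [H4 ha]
    simp only [E2' ha, clT, sE4', mul_add, mul_sub, mul_smul_comm, clR, clS]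
    repeat
      first
      | apply Submodule.add_mem
      | apply Submodule.sub_mem
      | apply Submodule.smul_mem
      | exact mem_shape _ _ _
  · rw [H4 ha, Ht2s ha, H5 ha]
    simp only [clT, sE4', mul_add, mul_sub, mul_smul_comm, clR, clS]
    repeat
      first
      | apply Submodule.add_mem
      | apply Submodule.sub_mem
      | apply Submodule.smul_mem
      | exact mem_shape _ _ _

lemma adjoin_gen_top :
    Algebra.adjoin k (Set.range (gen k (Prel k a))) = ⊤ := by
  have h1 : Set.range (gen k (Prel k a))
      = (RingQuot.mkAlgHom k (fun u v : F3 k => u ∈ Prel k a ∧ v = 0)) ''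
          (Set.range (FreeAlgebra.ι k)) := by
    rw [← Set.range_comp]; rfl
  rw [h1, ← AlgHom.map_adjoin, FreeAlgebra.adjoin_range_ι, Algebra.map_top,
    AlgHom.range_eq_top]
  exact RingQuot.mkAlgHom_surjective k _

lemma gen_mul_mem (ha : a ≠ 1) (i : Fin 3) :
    ∀ v ∈ Msub a, gen k (Prel k a) i * v ∈ Msub a := by
  have key : Msub a ≤ (Msub a).comap (LinearMap.mulLeft k (gen k (Prel k a) i)) := by
    rw [Msub, Submodule.span_le]
    rintro _ ⟨p, rfl⟩
    simp only [SetLike.mem_coe, Submodule.mem_comap, LinearMap.mulLeft_apply]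
    have hm : mono a p = rg a ^ p.1 * (sg a ^ p.2.1 * tg a ^ p.2.2) := by
      rw [mono, mul_assoc]
    rw [hm]
    fin_cases i
    · exact r_mem p
    · exact s_mem p
    · exact t_mem ha p
  intro v hv
  exact key hv

lemma Msub_top (ha : a ≠ 1) : Msub a = ⊤ := by
  set N : Subalgebra k (quotAlg k (Prel k a)) :=
    { carrier := {x | ∀ v ∈ Msub a, x * v ∈ Msub a}
      mul_mem' := fun {x y} hx hy v hv => by
        rw [mul_assoc]; exact hx _ (hy _ hv)
      one_mem' := fun v hv => by rwa [one_mul]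
      add_mem' := fun {x y} hx hy v hv => by
        rw [add_mul]; exact Submodule.add_mem _ (hx _ hv) (hy _ hv)
      zero_mem' := fun v hv => by rw [zero_mul]; exact Submodule.zero_mem _
      algebraMap_mem' := fun c v hv => by
        rw [← Algebra.smul_def]; exact Submodule.smul_mem _ _ hv } with hN
  have hsub : Set.range (gen k (Prel k a)) ⊆ (N : Set (quotAlg k (Prel k a))) := by
    rintro _ ⟨i, rfl⟩
    exact gen_mul_mem ha i
  have htop : (⊤ : Subalgebra k (quotAlg k (Prel k a))) ≤ N := by
    rw [← adjoin_gen_top (a := a)]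
    exact Algebra.adjoin_le hsub
  have hone : (1 : quotAlg k (Prel k a)) ∈ Msub a := by
    have : mono a (0, 0, 0) = 1 := by simp [mono]
    exact this ▸ Submodule.subset_span ⟨(0, 0, 0), rfl⟩
  rw [eq_top_iff]
  intro x _
  have hx : x ∈ N := htop trivial
  have := hx 1 hone
  rwa [mul_one] at this

end Straighten


/-! ### The linear equivalence and the basis -/

section Assemble

variable {k : Type} [Field k] (a : k)

noncomputable def rho' (a : k) : quotAlg k (Prel k a) →ₐ[k] Module.End k (V k) :=
  RingQuot.liftAlgHom k ⟨rho a, by rintro x y ⟨hx, rfl⟩; rw [rho_rel a x hx, map_zero]⟩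

lemma rho'_gen (i : Fin 3) : rho' a (gen k (Prel k a) i) = gvec a i := by
  rw [gen, rho', RingQuot.liftAlgHom_mkAlgHom_apply, rho, FreeAlgebra.lift_ι_apply]

noncomputable def phi (a : k) : quotAlg k (Prel k a) →ₗ[k] V k where
  toFun x := rho' a x (bas k (0, 0, 0))
  map_add' x y := by simp [map_add, LinearMap.add_apply]
  map_smul' c x := by simp [map_smul, LinearMap.smul_apply]

lemma opT_pow (Kk : ℕ) : ∀ m : ℕ, ((opT a) ^ Kk) (bas k (0, 0, m)) = bas k (0, 0, m + Kk) := by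
  induction Kk with
  | zero => intro m; simp
  | succ K ih =>
    intro m
    rw [pow_succ, Module.End.mul_apply, opT_bas, Tee a 0 0 m rfl rfl, ih (m + 1),
      show m + 1 + K = m + (K + 1) by omega]

lemma opS_pow (j : ℕ) : ∀ n K' : ℕ, ((opS k) ^ j) (bas k (0, n, K')) = bas k (0, n + j, K') := by
  induction j with
  | zero => intro n K'; simp
  | succ j ih =>
    intro n K'
    rw [pow_succ, Module.End.mul_apply, opS_bas, pow_zero, one_smul, ih (n + 1) K',
      show n + 1 + j = n + (j + 1) by omega]

lemma opR_pow (i : ℕ) : ∀ m' j K' : ℕ,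
    ((opR k) ^ i) (bas k (m', j, K')) = bas k (m' + i, j, K') := by
  induction i with
  | zero => intro m' j K'; simp
  | succ i ih =>
    intro m' j K'
    rw [pow_succ, Module.End.mul_apply, opR_bas, ih (m' + 1) j K',
      show m' + 1 + i = m' + (i + 1) by omega]

lemma phi_mono (p : ℕ × ℕ × ℕ) : phi a (mono a p) = Finsupp.single p 1 := by
  obtain ⟨i, j, K⟩ := p
  show rho' a (rg a ^ i * sg a ^ j * tg a ^ K) (bas k (0, 0, 0)) = _
  rw [map_mul, map_mul, map_pow, map_pow, map_pow]
  rw [show rg a = gen k (Prel k a) 0 from rfl, show sg a = gen k (Prel k a) 1 from rfl,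
    show tg a = gen k (Prel k a) 2 from rfl, rho'_gen, rho'_gen, rho'_gen]
  simp only [gvec, Matrix.cons_val_zero, Matrix.cons_val_one, Matrix.head_cons,
    Matrix.cons_val_two, Matrix.tail_cons]
  rw [Module.End.mul_apply, Module.End.mul_apply, opT_pow, opS_pow, opR_pow]
  simp [bas]

noncomputable def psi (a : k) : V k →ₗ[k] quotAlg k (Prel k a) :=
  Finsupp.linearCombination k (mono a)

lemma psi_single (p : ℕ × ℕ × ℕ) : psi a (Finsupp.single p 1) = mono a p := by
  simp [psi, Finsupp.linearCombination_single]

lemma phi_comp_psi : (phi a).comp (psi a) = LinearMap.id := by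
  refine Finsupp.lhom_ext fun p b => ?_
  have hb : (Finsupp.single p b : V k) = b • Finsupp.single p 1 := by
    rw [Finsupp.smul_single, smul_eq_mul, mul_one]
  rw [LinearMap.comp_apply, LinearMap.id_apply, hb, map_smul, map_smul, psi_single,
    phi_mono]

variable {a}

lemma psi_surjective (ha : a ≠ 1) : Function.Surjective (psi a) := by
  rw [← LinearMap.range_eq_top, psi, Finsupp.range_linearCombination]
  exact Msub_top ha

lemma psi_comp_phi (ha : a ≠ 1) : (psi a).comp (phi a) = LinearMap.id := by
  apply LinearMap.ext
  intro x
  obtain ⟨v, rfl⟩ := psi_surjective ha x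
  have hv := LinearMap.congr_fun (phi_comp_psi a) v
  rw [LinearMap.comp_apply, LinearMap.id_apply] at hv ⊢
  rw [hv]

noncomputable def eqv (ha : a ≠ 1) : V k ≃ₗ[k] quotAlg k (Prel k a) :=
  LinearEquiv.ofLinear (psi a) (phi a) (psi_comp_phi ha) (phi_comp_psi a)

noncomputable def bQ (ha : a ≠ 1) : Module.Basis (ℕ × ℕ × ℕ) k (quotAlg k (Prel k a)) :=
  Finsupp.basisSingleOne.map (eqv ha)

lemma bQ_apply (ha : a ≠ 1) (p : ℕ × ℕ × ℕ) : bQ ha p = mono a p := by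
  rw [bQ, Module.Basis.map_apply]
  have h1 : (Finsupp.basisSingleOne : Module.Basis (ℕ × ℕ × ℕ) k (V k)) p
      = Finsupp.single p 1 := congrFun Finsupp.coe_basisSingleOne p
  rw [h1]
  show psi a (Finsupp.single p 1) = mono a p
  exact psi_single a p

lemma mem_center_of_commute_gens (z : quotAlg k (Prel k a))
    (h : ∀ i : Fin 3, gen k (Prel k a) i * z = z * gen k (Prel k a) i) :
    z ∈ Subalgebra.center k (quotAlg k (Prel k a)) := by
  rw [Subalgebra.mem_center_iff]
  intro g
  have hle : Algebra.adjoin k (Set.range (gen k (Prel k a)))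
      ≤ Subalgebra.centralizer k {z} := by
    apply Algebra.adjoin_le
    rintro _ ⟨i, rfl⟩
    rw [SetLike.mem_coe, Subalgebra.mem_centralizer_iff]
    rintro u hu
    rw [Set.mem_singleton_iff] at hu
    subst hu
    exact (h i).symm
  have hg : g ∈ Subalgebra.centralizer k {z} := by
    apply hle
    rw [adjoin_gen_top (a := a)]
    exact Algebra.mem_top
  exact (Subalgebra.mem_centralizer_iff k |>.mp hg z rfl).symm

end Assemble

theorem stmt17 (k : Type) [Field k] [IsAlgClosed k] (hchar : ringChar k ≠ 2)
    (a : k) (ha : a ≠ 1) :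
    (gen k (Prel k a) 0 ^ 2 ∈ Subalgebra.center k (quotAlg k (Prel k a))) ∧
    (gen k (Prel k a) 1 ^ 2 ∈ Subalgebra.center k (quotAlg k (Prel k a))) ∧
    (gen k (Prel k a) 2 ^ 2 ∈ Subalgebra.center k (quotAlg k (Prel k a))) ∧
    ∃ b : Module.Basis (ℕ × ℕ × ℕ) k (quotAlg k (Prel k a)),
      ∀ p : ℕ × ℕ × ℕ,
        b p = gen k (Prel k a) 0 ^ p.1 * gen k (Prel k a) 1 ^ p.2.1 *
          gen k (Prel k a) 2 ^ p.2.2 := by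
  refine ⟨?_, ?_, ?_, ⟨bQ ha, fun p => ?_⟩⟩
  · have hz : (gen k (Prel k a) 0) ^ 2 = rg a * rg a := by rw [pow_two]; rfl
    rw [hz]
    apply mem_center_of_commute_gens
    intro i
    fin_cases i
    · exact (mul_assoc _ _ _).symm
    · exact (q_rrs a).symm
    · exact q_tr2 ha
  · have hz : (gen k (Prel k a) 1) ^ 2 = sg a * sg a := by rw [pow_two]; rfl
    rw [hz]
    apply mem_center_of_commute_gens
    intro i
    fin_cases i
    · exact (q_ssr a).symm
    · exact (mul_assoc _ _ _).symm
    · exact q_ts2 ha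
  · have hz : (gen k (Prel k a) 2) ^ 2 = tg a * tg a := by rw [pow_two]; rfl
    rw [hz]
    apply mem_center_of_commute_gens
    intro i
    fin_cases i
    · exact (q_ttr ha).symm
    · exact (q_tts ha).symm
    · exact (mul_assoc _ _ _).symm
  · rw [bQ_apply ha p]
    rfl
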